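/- A decreasing function γ : [0,1] → [0,∞] is a p-to-e calibrator (i.e., E[γ(P)] ≤ 1 for every random variable P satisfying P(P ≤ α) ≤ α for all α ∈ [0,1]) if and only if ∫_0^1 γ(p) dp ≤ 1. -/

import Mathlib

open MeasureTheory ENNReal

lemma pointwise_layercake_aux (a : ℝ≥0∞) :
    ∫⁻ t in Set.Ioi (0:ℝ), Set.indicator {t : ℝ | ENNReal.ofReal t < a} (fun _ => (1:ℝ≥0∞)) t
      = a := by
  rw [lintegral_indicator]
  · rw [Measure.restrict_restrict]
    · rw [setLIntegral_const]
      rcases eq_or_ne a ∞ with h | h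
      · subst h
        have : {t : ℝ | ENNReal.ofReal t < ⊤} = Set.univ := by
          ext t; simp [ENNReal.ofReal_lt_top]
        simp [this]
      · have : {t : ℝ | ENNReal.ofReal t < a} ∩ Set.Ioi (0:ℝ) = Set.Ioo 0 a.toReal := by
          ext t
          simp only [Set.mem_inter_iff, Set.mem_setOf_eq, Set.mem_Ioi, Set.mem_Ioo]
          constructor
          · rintro ⟨hlt, ht⟩
            exact ⟨ht, (ENNReal.ofReal_lt_iff_lt_toReal ht.le h).mp hlt⟩
          · rintro ⟨ht, hlt⟩
            exact ⟨(ENNReal.ofReal_lt_iff_lt_toReal ht.le h).mpr hlt, ht⟩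
        rw [this, Real.volume_Ioo, one_mul, sub_zero, ENNReal.ofReal_toReal h]
    · exact measurableSet_lt (ENNReal.measurable_ofReal) measurable_const
  · exact measurableSet_lt (ENNReal.measurable_ofReal) measurable_const

lemma lintegral_eq_meas_superlevel {Ω : Type*} [MeasurableSpace Ω] (μ : Measure Ω) [SFinite μ]
    (f : Ω → ℝ≥0∞) (hf : Measurable f) :
    ∫⁻ ω, f ω ∂μ = ∫⁻ t in Set.Ioi (0:ℝ), μ {ω | ENNReal.ofReal t < f ω} := by
  set g : Ω → ℝ → ℝ≥0∞ :=
    fun ω t => Set.indicator {t : ℝ | ENNReal.ofReal t < f ω} (fun _ => (1:ℝ≥0∞)) t with hg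
  have hset : MeasurableSet {p : Ω × ℝ | ENNReal.ofReal p.2 < f p.1} :=
    measurableSet_lt (ENNReal.measurable_ofReal.comp measurable_snd) (hf.comp measurable_fst)
  have hmeas : AEMeasurable (Function.uncurry g) (μ.prod (volume.restrict (Set.Ioi (0:ℝ)))) := by
    have : Function.uncurry g
        = Set.indicator {p : Ω × ℝ | ENNReal.ofReal p.2 < f p.1} (fun _ => (1:ℝ≥0∞)) := by
      ext ⟨ω, t⟩
      by_cases h : ENNReal.ofReal t < f ω <;> simp [hg, Function.uncurry, Set.indicator, h]
    rw [this]
    exact (measurable_const.indicator hset).aemeasurable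
  calc ∫⁻ ω, f ω ∂μ
      = ∫⁻ ω, (∫⁻ t in Set.Ioi (0:ℝ), g ω t) ∂μ := by
        simp_rw [hg, pointwise_layercake_aux]
    _ = ∫⁻ t in Set.Ioi (0:ℝ), ∫⁻ ω, g ω t ∂μ := lintegral_lintegral_swap hmeas
    _ = ∫⁻ t in Set.Ioi (0:ℝ), μ {ω | ENNReal.ofReal t < f ω} := by
        refine lintegral_congr fun t => ?_
        have heq : (fun ω => g ω t)
            = fun ω => Set.indicator {ω | ENNReal.ofReal t < f ω} (fun _ => (1:ℝ≥0∞)) ω := by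
          ext ω
          by_cases h : ENNReal.ofReal t < f ω <;> simp [hg, Set.indicator, h]
        rw [heq, lintegral_indicator_const (measurableSet_lt measurable_const hf), one_mul]

/-- Comparison of superlevel-set measures: the superlevel sets of `γ ∘ P` have measure at most
those of `γ` under the uniform measure on `[0,1]`. -/
lemma superlevel_comparison
    (γ : ℝ → ℝ≥0∞) (hγmeas : Measurable γ) (hγ : AntitoneOn γ (Set.Icc (0 : ℝ) 1))
    {Ω : Type} [MeasurableSpace Ω] (μ : Measure Ω)
    (P : Ω → ℝ) (hPmem : ∀ ω, P ω ∈ Set.Icc (0 : ℝ) 1)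
    (hPsup : ∀ α ∈ Set.Icc (0 : ℝ) 1, μ {ω | P ω ≤ α} ≤ ENNReal.ofReal α)
    (c : ℝ≥0∞) :
    μ {ω | c < γ (P ω)} ≤ (volume.restrict (Set.Icc (0:ℝ) 1)) {p | c < γ p} := by
  set S : Set ℝ := {p ∈ Set.Icc (0:ℝ) 1 | c < γ p} with hS
  rcases S.eq_empty_or_nonempty with hemp | hne
  · have : {ω | c < γ (P ω)} = ∅ := by
      ext ω
      simp only [Set.mem_setOf_eq, Set.mem_empty_iff_false, iff_false, not_lt]
      by_contra h
      push_neg at h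
      have : P ω ∈ S := ⟨hPmem ω, h⟩
      rw [hemp] at this
      exact this
    rw [this]
    simp
  · set s := sSup S with hs
    have hSbdd : BddAbove S := ⟨1, fun p hp => hp.1.2⟩
    have hs1 : s ≤ 1 := csSup_le hne fun p hp => hp.1.2
    have hs0 : 0 ≤ s := by
      obtain ⟨p, hp⟩ := hne
      exact le_trans hp.1.1 (le_csSup hSbdd hp)
    have hsub : Set.Ico (0:ℝ) s ⊆ S := by
      intro q hq
      obtain ⟨p, hpS, hqp⟩ := exists_lt_of_lt_csSup hne hq.2
      have hqIcc : q ∈ Set.Icc (0:ℝ) 1 := ⟨hq.1, le_trans (le_of_lt hq.2) hs1⟩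
      exact ⟨hqIcc, lt_of_lt_of_le hpS.2 (hγ hqIcc hpS.1 hqp.le)⟩
    have h1 : μ {ω | c < γ (P ω)} ≤ ENNReal.ofReal s := by
      refine le_trans (measure_mono ?_) (hPsup s ⟨hs0, hs1⟩)
      intro ω hω
      exact le_csSup hSbdd ⟨hPmem ω, hω⟩
    have h2 : ENNReal.ofReal s ≤ (volume.restrict (Set.Icc (0:ℝ) 1)) {p | c < γ p} := by
      rw [Measure.restrict_apply (measurableSet_lt measurable_const hγmeas)]
      have : Set.Ico (0:ℝ) s ⊆ {p | c < γ p} ∩ Set.Icc (0:ℝ) 1 := fun q hq =>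
        ⟨(hsub hq).2, (hsub hq).1⟩
      calc ENNReal.ofReal s = volume (Set.Ico (0:ℝ) s) := by rw [Real.volume_Ico, sub_zero]
        _ ≤ _ := measure_mono this
    exact le_trans h1 h2

/-- A decreasing function `γ : [0,1] → [0,∞]` is a p-to-e calibrator
(i.e., `𝔼[γ(P)] ≤ 1` for every super-uniform `[0,1]`-valued random variable `P`, on any
probability space) if and only if `∫_0^1 γ(p) dp ≤ 1`. -/
theorem p_to_e_calibrator_iff
    (γ : ℝ → ℝ≥0∞) (hγmeas : Measurable γ) (hγ : AntitoneOn γ (Set.Icc (0 : ℝ) 1)) :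
    (∀ (Ω : Type) (mΩ : MeasurableSpace Ω) (μ : Measure Ω),
        IsProbabilityMeasure μ → ∀ P : Ω → ℝ, Measurable P →
        (∀ ω, P ω ∈ Set.Icc (0 : ℝ) 1) →
        (∀ α ∈ Set.Icc (0 : ℝ) 1, μ {ω | P ω ≤ α} ≤ ENNReal.ofReal α) →
        ∫⁻ ω, γ (P ω) ∂μ ≤ 1) ↔
      ∫⁻ p in Set.Icc (0 : ℝ) 1, γ p ≤ 1 := by
  constructor
  · intro h
    -- apply with the uniform distribution on [0,1]
    have hprob : IsProbabilityMeasure (volume.restrict (Set.Icc (0:ℝ) 1)) := by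
      constructor
      rw [Measure.restrict_apply_univ, Real.volume_Icc]
      norm_num
    set P : ℝ → ℝ := fun x => max (min x 1) 0 with hP
    have hPmeas : Measurable P := (measurable_id.min measurable_const).max measurable_const
    have hPmem : ∀ x, P x ∈ Set.Icc (0:ℝ) 1 :=
      fun x => ⟨le_max_right _ _, max_le (min_le_right _ _) zero_le_one⟩
    have hPid : ∀ x ∈ Set.Icc (0:ℝ) 1, P x = x := by
      intro x hx
      simp only [hP]
      rw [min_eq_left hx.2, max_eq_left hx.1]
    have hPsup : ∀ α ∈ Set.Icc (0:ℝ) 1,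
        (volume.restrict (Set.Icc (0:ℝ) 1)) {x | P x ≤ α} ≤ ENNReal.ofReal α := by
      intro α hα
      rw [Measure.restrict_apply (measurableSet_le (by fun_prop) measurable_const)]
      have : {x | P x ≤ α} ∩ Set.Icc (0:ℝ) 1 ⊆ Set.Icc 0 α := by
        rintro x ⟨hx1, hx2⟩
        exact ⟨hx2.1, by rw [← hPid x hx2]; exact hx1⟩
      calc volume ({x | P x ≤ α} ∩ Set.Icc (0:ℝ) 1) ≤ volume (Set.Icc 0 α) := measure_mono this
        _ = ENNReal.ofReal α := by rw [Real.volume_Icc, sub_zero]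
    have hkey := h ℝ Real.measurableSpace (volume.restrict (Set.Icc (0:ℝ) 1)) hprob
      P hPmeas hPmem hPsup
    have : ∫⁻ x in Set.Icc (0:ℝ) 1, γ (P x) = ∫⁻ x in Set.Icc (0:ℝ) 1, γ x := by
      refine setLIntegral_congr_fun measurableSet_Icc ?_
      intro x hx
      show γ (P x) = γ x
      rw [hPid x hx]
    rw [← this]
    exact hkey
  · intro hint Ω mΩ μ hprob P hPmeas hPmem hPsup
    have h1 : ∫⁻ ω, γ (P ω) ∂μ
        = ∫⁻ t in Set.Ioi (0:ℝ), μ {ω | ENNReal.ofReal t < γ (P ω)} :=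
      lintegral_eq_meas_superlevel μ _ (hγmeas.comp hPmeas)
    have h2 : ∫⁻ p in Set.Icc (0:ℝ) 1, γ p
        = ∫⁻ t in Set.Ioi (0:ℝ),
            (volume.restrict (Set.Icc (0:ℝ) 1)) {p | ENNReal.ofReal t < γ p} :=
      lintegral_eq_meas_superlevel _ _ hγmeas
    rw [h1]
    rw [h2] at hint
    refine le_trans (lintegral_mono fun t => ?_) hint
    exact superlevel_comparison γ hγmeas hγ μ P hPmem hPsup _
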